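/- The ordering of the Apollonian alphabet by the index n is natural: the quantity ‖φ'_{k,n}‖_∞ = max_{z∈𝔻}|φ'_{k,n}(z)| does not depend on k, and for all k₁, k₂ ∈ {1,…,6} and positive integers n₁ ≤ n₂ one has ‖φ'_{k₁,n₁}‖_∞ ≥ ‖φ'_{k₂,n₂}‖_∞. -/

import Mathlib

open Complex Metric Set
open scoped ENNReal

noncomputable section

/-- λ = √3 -/
def lam : ℝ := Real.sqrt 3

/-- The Möbius map f(z) = ((λ−1)z+1)/(−z+λ+1). -/
def apolF : ℂ → ℂ := fun z => (((lam : ℂ) - 1) * z + 1) / (-z + (lam : ℂ) + 1)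

/-- Rotation by angle θ. -/
def Rot (θ : ℝ) : ℂ → ℂ := fun z => Complex.exp ((θ : ℂ) * Complex.I) * z

/-- θ_k = (−1)^k · 2π/3 -/
def thetaA (k : ℕ) : ℝ := (-1 : ℝ) ^ k * (2 * Real.pi / 3)

/-- θ'_k = 2πk/3 -/
def thetaB (k : ℕ) : ℝ := 2 * Real.pi * k / 3

/-- The Apollonian generators φ_{k,n} = R_{θ'_k} ∘ f^n ∘ R_{θ_k} ∘ f. -/
def phi (k n : ℕ) : ℂ → ℂ := Rot (thetaB k) ∘ (apolF^[n]) ∘ Rot (thetaA k) ∘ apolF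

/-- The closed unit disk 𝔻. -/
def unitD : Set ℂ := Metric.closedBall (0 : ℂ) 1

/-- ‖φ'_{k,n}‖_∞ = max over the closed unit disk of |φ'_{k,n}|. -/
def Dnorm (k n : ℕ) : ℝ := sSup ((fun z => ‖deriv (phi k n) z‖) '' unitD)

lemma lam_pos : 0 < lam := Real.sqrt_pos.2 (by norm_num)
lemma lam_sq : lam ^ 2 = 3 := Real.sq_sqrt (by norm_num)
lemma lam_lt_two : lam < 2 := by
  have := lam_sq; nlinarith [lam_pos]
lemma one_lt_lam : 1 < lam := by
  have := lam_sq; nlinarith [lam_pos]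
lemma lam_sqC : (lam : ℂ) ^ 2 = 3 := by
  rw [← Complex.ofReal_pow, lam_sq]; norm_num
lemma lamC_ne : (lam : ℂ) ≠ 0 := by
  simpa using lam_pos.ne'

def denn (n : ℕ) (w : ℂ) : ℂ := -(n : ℂ) * w + n + lam

lemma den_ne {n : ℕ} {z : ℂ} (h : (n : ℝ) * ‖z‖ < n + lam) :
    denn n z ≠ 0 := by
  intro hz
  have : (n : ℂ) * z = (n : ℂ) + lam := by rw [denn] at hz; linear_combination -hz
  have habs : (n : ℝ) * ‖z‖ = n + lam := by
    have h2 := congrArg (‖·‖) this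
    rw [norm_mul, Complex.norm_natCast,
      show (n:ℂ) + (lam:ℂ) = (((n:ℝ) + lam : ℝ) : ℂ) by push_cast; ring,
      Complex.norm_real, Real.norm_of_nonneg] at h2
    · exact h2
    · have h3 := lam_pos; have h4 : (0:ℝ) ≤ (n:ℝ) := Nat.cast_nonneg n; linarith
  linarith

lemma den_bound {n : ℕ} {z : ℂ} (hz : ‖z‖ < 1 + lam / (2 * (n + 1))) {m : ℕ}
    (hm : m ≤ n + 1) : (m : ℝ) * ‖z‖ < m + lam := by
  have h0 : (0:ℝ) ≤ ‖z‖ := norm_nonneg z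
  have hmn : (m : ℝ) ≤ (n : ℝ) + 1 := by exact_mod_cast hm
  have hl := lam_pos
  rcases Nat.eq_zero_or_pos m with rfl | hmpos
  · simpa using hl
  have hm1 : (1:ℝ) ≤ (m:ℝ) := by exact_mod_cast hmpos
  have h1 : (m : ℝ) * ‖z‖ < m * (1 + lam / (2 * (n + 1))) := by
    apply mul_lt_mul_of_pos_left hz (by linarith)
  have h2 : (m : ℝ) * (lam / (2 * (n + 1))) < lam := by
    rw [div_eq_mul_inv]
    rw [show (m:ℝ) * (lam * (2 * ((n:ℝ) + 1))⁻¹) = lam * ((m:ℝ) / (2 * ((n:ℝ)+1))) by ring]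
    have : (m:ℝ) / (2 * ((n:ℝ)+1)) < 1 := by
      rw [div_lt_one (by positivity)]; linarith
    nlinarith
  nlinarith

lemma iter_eq (n : ℕ) : ∀ z : ℂ, ‖z‖ < 1 + lam / (2 * (n + 1)) →
    apolF^[n] z = (((lam : ℂ) - n) * z + n) / denn n z := by
  induction n with
  | zero =>
    intro z _
    simp only [Function.iterate_zero, id_eq, Nat.cast_zero, neg_zero, zero_mul, sub_zero,
      add_zero, zero_add, denn]
    rw [mul_comm, mul_div_assoc, div_self lamC_ne, mul_one]
  | succ n ih =>
    intro z hz
    have hz' : ‖z‖ < 1 + lam / (2 * (n + 1)) := by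
      have : lam / (2 * ((n:ℝ) + 1 + 1)) ≤ lam / (2 * ((n:ℝ) + 1)) := by
        apply div_le_div_of_nonneg_left lam_pos.le (by positivity) (by linarith)
      push_cast at hz ⊢
      linarith
    have hd1 : denn n z ≠ 0 := den_ne (den_bound hz (by omega))
    have hd2 : denn (n + 1) z ≠ 0 := den_ne (den_bound hz (by omega))
    rw [Function.iterate_succ_apply', ih z hz', apolF]
    have hmid : -((((lam : ℂ) - n) * z + n) / denn n z) + lam + 1 =
        (lam * denn (n+1) z) / denn n z := by
      field_simp [hd1]
      simp only [denn]
      push_cast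
      ring
    rw [hmid]
    have hnum : ((lam:ℂ) - 1) * ((((lam : ℂ) - n) * z + n) / denn n z) + 1 =
        (lam * (((lam:ℂ) - (n+1)) * z + (n+1))) / denn n z := by
      field_simp [hd1]
      simp only [denn]
      push_cast
      ring
    rw [hnum]
    rw [div_div_div_cancel_right₀]
    · rw [mul_div_mul_left _ _ lamC_ne]
      push_cast; ring_nf
    · exact hd1


lemma abs_denn_ge (n : ℕ) (w : ℂ) (hw : ‖w‖ ≤ 1) :
    lam ≤ ‖denn n w‖ := by
  have h1 : denn n w = (((n : ℝ) + lam : ℝ) : ℂ) - (n : ℂ) * w := by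
    simp only [denn]; push_cast; ring
  have h2 : ‖(((n : ℝ) + lam : ℝ) : ℂ)‖ - ‖(n : ℂ) * w‖
      ≤ ‖denn n w‖ := by
    rw [h1]
    simpa using norm_sub_norm_le ((((n : ℝ) + lam : ℝ) : ℂ)) ((n : ℂ) * w)
  have h3 : ‖(((n : ℝ) + lam : ℝ) : ℂ)‖ = (n : ℝ) + lam := by
    rw [Complex.norm_real, Real.norm_of_nonneg]
    have := lam_pos; have : (0:ℝ) ≤ (n:ℝ) := Nat.cast_nonneg n; linarith [lam_pos]
  have h4 : ‖(n : ℂ) * w‖ ≤ (n : ℝ) := by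
    rw [norm_mul, Complex.norm_natCast]
    calc (n:ℝ) * ‖w‖ ≤ (n:ℝ) * 1 := by
          apply mul_le_mul_of_nonneg_left hw (Nat.cast_nonneg n)
      _ = n := mul_one _
  linarith

lemma denn_ne (n : ℕ) (w : ℂ) (hw : ‖w‖ ≤ 1) : denn n w ≠ 0 := by
  intro h
  have := abs_denn_ge n w hw
  rw [h] at this
  simp at this
  linarith [lam_pos]

lemma hasDerivAt_moeb (n : ℕ) (z : ℂ) (hz : denn n z ≠ 0) :
    HasDerivAt (fun w => (((lam : ℂ) - n) * w + n) / denn n w) (3 / (denn n z)^2) z := by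
  have hnum : HasDerivAt (fun w : ℂ => ((lam : ℂ) - n) * w + (n : ℂ)) ((lam : ℂ) - n) z := by
    simpa using ((hasDerivAt_id z).const_mul ((lam : ℂ) - n)).add_const (n : ℂ)
  have hden : HasDerivAt (fun w : ℂ => denn n w) (-(n : ℂ)) z := by
    simp only [denn]
    simpa using (((hasDerivAt_id z).const_mul (-(n : ℂ))).add_const (n : ℂ)).add_const (lam : ℂ)
  have h := hnum.div hden hz
  refine HasDerivAt.congr_deriv h (Eq.symm ?_)
  rw [div_eq_div_iff (pow_ne_zero 2 hz) (pow_ne_zero 2 hz)]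
  simp only [denn]
  linear_combination (-(-(n:ℂ)*z + (n:ℂ) + (lam:ℂ))^2) * lam_sqC

lemma iter_eventuallyEq (n : ℕ) (w : ℂ) (hw : ‖w‖ ≤ 1) :
    apolF^[n] =ᶠ[nhds w] fun z => (((lam : ℂ) - n) * z + n) / denn n z := by
  have hopen : IsOpen {z : ℂ | ‖z‖ < 1 + lam / (2 * (n + 1))} :=
    isOpen_lt continuous_norm continuous_const
  have hmem : w ∈ {z : ℂ | ‖z‖ < 1 + lam / (2 * (n + 1))} := by
    have h0 : (0:ℝ) < lam / (2 * ((n:ℝ) + 1)) := div_pos lam_pos (by positivity)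
    simp only [Set.mem_setOf_eq]
    linarith
  filter_upwards [hopen.mem_nhds hmem] with z hz
  exact iter_eq n z hz

lemma hasDeriv_iter (n : ℕ) (w : ℂ) (hw : ‖w‖ ≤ 1) :
    HasDerivAt (apolF^[n]) (3 / (denn n w)^2) w :=
  (hasDerivAt_moeb n w (denn_ne n w hw)).congr_of_eventuallyEq (iter_eventuallyEq n w hw)

lemma apolF_eq_moeb : apolF = fun z => (((lam : ℂ) - (1:ℕ)) * z + (1:ℕ)) / denn 1 z := by
  funext z
  simp only [apolF, denn, Nat.cast_one]
  congr 1
  ring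

lemma apolF_mem (z : ℂ) (hz : ‖z‖ ≤ 1) : ‖apolF z‖ ≤ 1 := by
  have hden : denn 1 z ≠ 0 := denn_ne 1 z hz
  rw [apolF_eq_moeb]
  simp only [Nat.cast_one]
  rw [norm_div, div_le_one (norm_pos_iff.2 hden)]
  have habs : ‖z‖ ^ 2 ≤ 1 := by
    nlinarith [norm_nonneg z]
  have hxy : z.re ^ 2 + z.im ^ 2 ≤ 1 := by
    have h := Complex.sq_norm z
    rw [Complex.normSq_apply] at h
    nlinarith
  have h2 : (‖((lam:ℂ) - 1) * z + 1‖)^2 ≤ (‖denn 1 z‖)^2 := by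
    rw [Complex.sq_norm, Complex.sq_norm]
    simp only [denn, Complex.normSq_apply, Complex.add_re, Complex.add_im, Complex.mul_re,
      Complex.mul_im, Complex.sub_re, Complex.sub_im, Complex.neg_re, Complex.neg_im,
      Complex.one_re, Complex.one_im, Complex.ofReal_re, Complex.ofReal_im,
      Complex.natCast_re, Complex.natCast_im, Nat.cast_one]
    nlinarith [lam_sq, one_lt_lam, lam_lt_two, sq_nonneg (z.re - 1), sq_nonneg z.im,
      mul_nonneg (sub_nonneg.2 lam_lt_two.le) (sq_nonneg (z.re - 1))]
  nlinarith [norm_nonneg (((lam:ℂ) - 1) * z + 1), norm_nonneg (denn 1 z)]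


def Aabs (θ : ℝ) (n : ℕ) (z : ℂ) : ℝ :=
  3 / (‖denn n (Complex.exp ((θ : ℂ) * Complex.I) * apolF z)‖)^2 *
  (3 / (‖denn 1 z‖)^2)

lemma hasDerivAt_Rot (θ : ℝ) (z : ℂ) : HasDerivAt (Rot θ) (Complex.exp ((θ:ℂ) * Complex.I)) z := by
  have h := (hasDerivAt_id z).const_mul (Complex.exp ((θ:ℂ) * Complex.I)); rw [mul_one] at h; exact h

lemma abs_rot (θ : ℝ) (w : ℂ) :
    ‖Complex.exp ((θ:ℂ) * Complex.I) * w‖ = ‖w‖ := by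
  rw [norm_mul, Complex.norm_exp_ofReal_mul_I, one_mul]

lemma hasDeriv_phi (k n : ℕ) (z : ℂ) (hz : ‖z‖ ≤ 1) :
    HasDerivAt (phi k n)
      (Complex.exp ((thetaB k : ℂ) * Complex.I) *
        (3 / (denn n (Complex.exp ((thetaA k : ℂ) * Complex.I) * apolF z))^2 *
        (Complex.exp ((thetaA k : ℂ) * Complex.I) * (3 / (denn 1 z)^2)))) z := by
  have h1 : HasDerivAt apolF (3 / (denn 1 z)^2) z := by
    have := hasDeriv_iter 1 z hz
    rwa [Function.iterate_one] at this
  have hf1 : ‖apolF z‖ ≤ 1 := apolF_mem z hz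
  have h2 : HasDerivAt (Rot (thetaA k)) (Complex.exp ((thetaA k : ℂ) * Complex.I)) (apolF z) :=
    hasDerivAt_Rot _ _
  have hw : ‖Complex.exp ((thetaA k : ℂ) * Complex.I) * apolF z‖ ≤ 1 := by
    rw [abs_rot]; exact hf1
  have h3 : HasDerivAt (apolF^[n])
      (3 / (denn n (Complex.exp ((thetaA k : ℂ) * Complex.I) * apolF z))^2)
      (Complex.exp ((thetaA k : ℂ) * Complex.I) * apolF z) := hasDeriv_iter n _ hw
  have h4 := hasDerivAt_Rot (thetaB k) (apolF^[n] (Complex.exp ((thetaA k : ℂ) * Complex.I) * apolF z))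
  exact h4.comp z (h3.comp z (h2.comp z h1))

lemma mem_unitD {z : ℂ} : z ∈ unitD ↔ ‖z‖ ≤ 1 := by
  simp [unitD, Metric.mem_closedBall, Complex.dist_eq]

lemma abs_deriv_phi (k n : ℕ) (z : ℂ) (hz : ‖z‖ ≤ 1) :
    ‖deriv (phi k n) z‖ = Aabs (thetaA k) n z := by
  rw [(hasDeriv_phi k n z hz).deriv]
  simp [Aabs, norm_mul, norm_div, Complex.norm_exp_ofReal_mul_I, norm_pow]

lemma Dnorm_eq (k n : ℕ) : Dnorm k n = sSup ((fun z => Aabs (thetaA k) n z) '' unitD) := by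
  rw [Dnorm]
  congr 1
  apply Set.image_congr
  intro z hz
  exact abs_deriv_phi k n z (mem_unitD.1 hz)

lemma three_le_sq_abs_denn (n : ℕ) (w : ℂ) (hw : ‖w‖ ≤ 1) :
    3 ≤ (‖denn n w‖)^2 := by
  have h := abs_denn_ge n w hw
  nlinarith [lam_sq, lam_pos]

lemma Aabs_nonneg (θ : ℝ) (n : ℕ) (z : ℂ) : 0 ≤ Aabs θ n z := by
  unfold Aabs; positivity

lemma Aabs_le_one (θ : ℝ) (n : ℕ) (z : ℂ) (hz : ‖z‖ ≤ 1) : Aabs θ n z ≤ 1 := by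
  have hw : ‖Complex.exp ((θ:ℂ) * Complex.I) * apolF z‖ ≤ 1 := by
    rw [abs_rot]; exact apolF_mem z hz
  have h1 := three_le_sq_abs_denn n _ hw
  have h2 := three_le_sq_abs_denn 1 z hz
  have e1 : 3 / (‖denn n (Complex.exp ((θ:ℂ) * Complex.I) * apolF z)‖)^2 ≤ 1 := by
    rw [div_le_one (by linarith)]; linarith
  have e2 : 3 / (‖denn 1 z‖)^2 ≤ 1 := by
    rw [div_le_one (by linarith)]; linarith
  have p1 : (0:ℝ) ≤ 3 / (‖denn n (Complex.exp ((θ:ℂ) * Complex.I) * apolF z)‖)^2 := by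
    positivity
  calc Aabs θ n z ≤ 1 * 1 := by unfold Aabs; exact mul_le_mul e1 e2 (by positivity) (by norm_num)
    _ = 1 := one_mul 1

lemma abs_denn_mono {n₁ n₂ : ℕ} (h : n₁ ≤ n₂) (w : ℂ) (hw : ‖w‖ ≤ 1) :
    ‖denn n₁ w‖ ≤ ‖denn n₂ w‖ := by
  have hxy : w.re ^ 2 + w.im ^ 2 ≤ 1 := by
    have h1 := Complex.sq_norm w
    rw [Complex.normSq_apply] at h1
    nlinarith [norm_nonneg w]
  have hx : w.re ≤ 1 := by nlinarith [sq_nonneg w.im]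
  have hab : (n₁:ℝ) ≤ (n₂:ℝ) := by exact_mod_cast h
  have a0 : (0:ℝ) ≤ (n₁:ℝ) := Nat.cast_nonneg _
  have b0 : (0:ℝ) ≤ (n₂:ℝ) := Nat.cast_nonneg _
  have hsq : Complex.normSq (denn n₁ w) ≤ Complex.normSq (denn n₂ w) := by
    simp only [denn, Complex.normSq_apply, Complex.add_re, Complex.add_im, Complex.mul_re,
      Complex.mul_im, Complex.neg_re, Complex.neg_im, Complex.ofReal_re, Complex.ofReal_im,
      Complex.natCast_re, Complex.natCast_im]
    nlinarith [mul_nonneg (mul_nonneg (sub_nonneg.2 hab) (add_nonneg a0 b0)) (sq_nonneg (w.re - 1)),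
      mul_nonneg (mul_nonneg (sub_nonneg.2 hab) lam_pos.le) (sub_nonneg.2 hx),
      mul_nonneg (mul_nonneg (sub_nonneg.2 hab) (add_nonneg a0 b0)) (sq_nonneg w.im)]
  rw [Complex.norm_def, Complex.norm_def]
  exact Real.sqrt_le_sqrt hsq

lemma Aabs_mono (θ : ℝ) {n₁ n₂ : ℕ} (h : n₁ ≤ n₂) (z : ℂ) (hz : ‖z‖ ≤ 1) :
    Aabs θ n₂ z ≤ Aabs θ n₁ z := by
  have hw : ‖Complex.exp ((θ:ℂ) * Complex.I) * apolF z‖ ≤ 1 := by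
    rw [abs_rot]; exact apolF_mem z hz
  have h1 := abs_denn_ge n₁ _ hw
  have h2 := abs_denn_mono h _ hw
  have key : 3 / (‖denn n₂ (Complex.exp ((θ:ℂ) * Complex.I) * apolF z)‖)^2 ≤
      3 / (‖denn n₁ (Complex.exp ((θ:ℂ) * Complex.I) * apolF z)‖)^2 := by
    apply div_le_div_of_nonneg_left (by norm_num) (by nlinarith [lam_pos]) (by nlinarith [lam_pos])
  unfold Aabs
  apply mul_le_mul_of_nonneg_right key (by positivity)

lemma apolF_conj (z : ℂ) : apolF ((starRingEnd ℂ) z) = (starRingEnd ℂ) (apolF z) := by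
  simp only [apolF, map_div₀, map_add, map_mul, map_sub, map_one, map_neg, Complex.conj_ofReal]

lemma denn_conj (n : ℕ) (w : ℂ) : denn n ((starRingEnd ℂ) w) = (starRingEnd ℂ) (denn n w) := by
  simp only [denn, map_add, map_mul, map_neg, Complex.conj_ofReal, Complex.conj_natCast]

lemma Aabs_conj (θ : ℝ) (n : ℕ) (z : ℂ) : Aabs (-θ) n z = Aabs θ n ((starRingEnd ℂ) z) := by
  have key : Complex.exp (((-θ : ℝ) : ℂ) * Complex.I) * apolF z =
      (starRingEnd ℂ) (Complex.exp ((θ:ℂ) * Complex.I) * apolF ((starRingEnd ℂ) z)) := by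
    rw [map_mul, apolF_conj, Complex.conj_conj, ← Complex.exp_conj]
    simp [map_mul, Complex.conj_ofReal, Complex.conj_I]
  unfold Aabs
  rw [key, denn_conj, Complex.norm_conj, denn_conj, Complex.norm_conj]

lemma conj_unitD : (fun z => (starRingEnd ℂ) z) '' unitD = unitD := by
  ext w
  constructor
  · rintro ⟨z, hz, rfl⟩
    rw [mem_unitD] at hz ⊢
    rwa [Complex.norm_conj]
  · intro hw
    refine ⟨(starRingEnd ℂ) w, ?_, Complex.conj_conj w⟩
    rw [mem_unitD] at hw ⊢
    rwa [Complex.norm_conj]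

lemma image_Aabs_neg (θ : ℝ) (n : ℕ) :
    ((fun z => Aabs (-θ) n z) '' unitD) = ((fun z => Aabs θ n z) '' unitD) := by
  have hfun : (fun z => Aabs (-θ) n z) = (fun z => Aabs θ n z) ∘ (fun z => (starRingEnd ℂ) z) :=
    funext fun z => Aabs_conj θ n z
  rw [hfun, Set.image_comp, conj_unitD]

lemma Dnorm_indep (k₁ k₂ n : ℕ) : Dnorm k₁ n = Dnorm k₂ n := by
  rw [Dnorm_eq, Dnorm_eq]
  have hval : ∀ k : ℕ, thetaA k = 2 * Real.pi / 3 ∨ thetaA k = -(2 * Real.pi / 3) := by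
    intro k
    rcases Nat.even_or_odd k with hk | hk
    · left; rw [thetaA, hk.neg_one_pow, one_mul]
    · right; rw [thetaA, hk.neg_one_pow]; ring
  rcases hval k₁ with h₁ | h₁ <;> rcases hval k₂ with h₂ | h₂ <;> rw [h₁, h₂]
  · rw [image_Aabs_neg]
  · rw [image_Aabs_neg]

/-- Ordering the Apollonian alphabet by the index n is natural: ‖φ'_{k,n}‖_∞ is
independent of k and non-increasing in n. -/
theorem apollonian_natural_order :
    (∀ k₁ k₂ n : ℕ, 1 ≤ k₁ → k₁ ≤ 6 → 1 ≤ k₂ → k₂ ≤ 6 → 1 ≤ n →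
      Dnorm k₁ n = Dnorm k₂ n) ∧
    (∀ k₁ k₂ n₁ n₂ : ℕ, 1 ≤ k₁ → k₁ ≤ 6 → 1 ≤ k₂ → k₂ ≤ 6 → 1 ≤ n₁ → n₁ ≤ n₂ →
      Dnorm k₂ n₂ ≤ Dnorm k₁ n₁) := by
  constructor
  · intro k₁ k₂ n _ _ _ _ _
    exact Dnorm_indep k₁ k₂ n
  · intro k₁ k₂ n₁ n₂ _ _ _ _ _ h12
    rw [Dnorm_indep k₂ k₁ n₂]
    rw [Dnorm_eq, Dnorm_eq]
    have h0 : (0:ℂ) ∈ unitD := mem_unitD.2 (by simp)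
    have hne : ((fun z => Aabs (thetaA k₁) n₂ z) '' unitD).Nonempty :=
      ⟨_, Set.mem_image_of_mem _ h0⟩
    apply csSup_le hne
    rintro y ⟨z, hz, rfl⟩
    have hz' := mem_unitD.1 hz
    have hb : BddAbove ((fun z => Aabs (thetaA k₁) n₁ z) '' unitD) := by
      refine ⟨1, ?_⟩
      rintro y ⟨w, hw, rfl⟩
      exact Aabs_le_one _ _ _ (mem_unitD.1 hw)
    calc Aabs (thetaA k₁) n₂ z ≤ Aabs (thetaA k₁) n₁ z := Aabs_mono _ h12 z hz'
      _ ≤ sSup ((fun z => Aabs (thetaA k₁) n₁ z) '' unitD) :=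
        le_csSup hb (Set.mem_image_of_mem _ hz)

end
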